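/- Suppose W and U are operators of diagonal type on L²(𝕋) and U is unitary. Then the average trace 𝐓(W) = limsup_{#I→∞} (1/#I) Σ_{l∈I, j∈ℤ} |W_{l,j}|² (over integer intervals I) satisfies 𝐓(WU) = 𝐓(W) = 𝐓(UW); in particular 𝐓(U⁻¹WU) = 𝐓(W). -/

import Mathlib

open MeasureTheory Real Filter
open scoped ENNReal

namespace MuNorm

local instance : Fact (0 < 2 * π) := ⟨by positivity⟩

/-- The Hilbert space `L²(𝕋)` with respect to normalized Haar measure on the circle. -/
noncomputable abbrev HT :=
  Lp ℂ 2 (@AddCircle.haarAddCircle (2 * π) _)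

/-- The matrix of an operator on `L²(𝕋)` in the Fourier basis. -/
noncomputable def Wmat (W : HT →L[ℂ] HT) (j k : ℤ) : ℂ :=
  fourierBasis.repr (W (fourierBasis k)) j

/-- `W` is of diagonal type: its Fourier matrix is majorated by a summable sequence
`c` along diagonals. -/
def IsDT (W : HT →L[ℂ] HT) : Prop :=
  ∃ c : ℤ → ℝ, (∀ s, 0 ≤ c s) ∧ Summable c ∧ ∀ j k, ‖Wmat W j k‖ ≤ c (j - k)

/-- `‖W‖_DT`: the infimum of `∑ c_s` over majorating sequences. -/
noncomputable def dtNorm (W : HT →L[ℂ] HT) : ℝ :=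
  sInf {t | ∃ c : ℤ → ℝ, (∀ s, 0 ≤ c s) ∧ Summable c ∧
    (∀ j k, ‖Wmat W j k‖ ≤ c (j - k)) ∧ t = ∑' s, c s}


/-- The average trace `𝐓(W)` of `W*W`: the limsup of
`(1/#I) ∑_{l ∈ I, j ∈ ℤ} |W_{l,j}|²` over integer intervals `I = [a, a + N)`
as the length `N` tends to infinity. -/
noncomputable def bT (W : HT →L[ℂ] HT) : ℝ :=
  Filter.limsup
    (fun p : ℤ × ℕ =>
      (1 / (p.2 : ℝ)) * ∑ l ∈ Finset.Ico p.1 (p.1 + (p.2 : ℤ)), ∑' j : ℤ, ‖Wmat W l j‖ ^ 2)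
    (Filter.comap Prod.snd Filter.atTop)

/-! ### Auxiliary lemmas -/

noncomputable abbrev FB : HilbertBasis ℤ ℂ HT := fourierBasis

lemma wmat_inner (W : HT →L[ℂ] HT) (j k : ℤ) :
    Wmat W j k = inner (𝕜 := ℂ) (FB j) (W (FB k)) := by
  rw [Wmat, FB.repr_apply_apply]

lemma tsum_normsq_repr (x : HT) : ∑' j : ℤ, ‖FB.repr x j‖ ^ 2 = ‖x‖ ^ 2 := by
  have h := lp.norm_rpow_eq_tsum (p := 2) (by norm_num) (FB.repr x)
  have h2 : ((2 : ℝ≥0∞)).toReal = ((2 : ℕ) : ℝ) := by norm_num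
  rw [h2] at h
  simp only [Real.rpow_natCast] at h
  rw [← h, LinearIsometryEquiv.norm_map]

lemma summable_normsq_repr (x : HT) : Summable (fun j : ℤ => ‖FB.repr x j‖ ^ 2) := by
  have h := lp.memℓp (FB.repr x)
  have := (memℓp_gen_iff (p := 2) (by norm_num)).mp h
  have h2 : ((2 : ℝ≥0∞)).toReal = ((2 : ℕ) : ℝ) := by norm_num
  rw [h2] at this
  simpa only [Real.rpow_natCast] using this

lemma wmat_adjoint (W : HT →L[ℂ] HT) (l j : ℤ) :
    ‖Wmat W l j‖ = ‖FB.repr ((ContinuousLinearMap.adjoint W) (FB l)) j‖ := by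
  rw [wmat_inner, ← ContinuousLinearMap.adjoint_inner_left, ← inner_conj_symm,
    ← FB.repr_apply_apply, RCLike.norm_conj]

lemma colSum_eq (W : HT →L[ℂ] HT) (j : ℤ) :
    ∑' l : ℤ, ‖Wmat W l j‖ ^ 2 = ‖W (FB j)‖ ^ 2 := tsum_normsq_repr _

lemma rowSum_eq (W : HT →L[ℂ] HT) (l : ℤ) :
    ∑' j : ℤ, ‖Wmat W l j‖ ^ 2 = ‖(ContinuousLinearMap.adjoint W) (FB l)‖ ^ 2 := by
  simp_rw [wmat_adjoint]; exact tsum_normsq_repr _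

lemma summable_colsq (W : HT →L[ℂ] HT) (j : ℤ) :
    Summable (fun l : ℤ => ‖Wmat W l j‖ ^ 2) := summable_normsq_repr _

lemma summable_rowsq (W : HT →L[ℂ] HT) (l : ℤ) :
    Summable (fun j : ℤ => ‖Wmat W l j‖ ^ 2) := by
  simp_rw [wmat_adjoint]; exact summable_normsq_repr _

section unitary
variable {U : HT →L[ℂ] HT} (hUiso : ∀ f : HT, ‖U f‖ = ‖f‖) (hUsurj : Function.Surjective U)

noncomputable def uEquiv : HT ≃ₗᵢ[ℂ] HT :=
  LinearIsometryEquiv.ofSurjective ⟨(U : HT →ₗ[ℂ] HT), hUiso⟩ hUsurj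

lemma uEquiv_apply (x : HT) : uEquiv hUiso hUsurj x = U x := rfl

lemma adjoint_unitary_apply (x : HT) :
    (ContinuousLinearMap.adjoint U) x = (uEquiv hUiso hUsurj).symm x := by
  refine ext_inner_right ℂ fun y => ?_
  rw [ContinuousLinearMap.adjoint_inner_left]
  have := (uEquiv hUiso hUsurj).inner_map_map ((uEquiv hUiso hUsurj).symm x) y
  rw [(uEquiv hUiso hUsurj).apply_symm_apply, uEquiv_apply] at this
  exact this

include hUiso hUsurj in
lemma norm_adjoint_unitary (x : HT) : ‖(ContinuousLinearMap.adjoint U) x‖ = ‖x‖ := by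
  rw [adjoint_unitary_apply hUiso hUsurj, LinearIsometryEquiv.norm_map]

include hUiso hUsurj in
lemma inner_unitary_map (x y : HT) :
    inner (𝕜 := ℂ) (U x) (U y) = inner (𝕜 := ℂ) x y := by
  have := (uEquiv hUiso hUsurj).inner_map_map x y
  rwa [uEquiv_apply, uEquiv_apply] at this

end unitary

lemma bT_comp_right (W : HT →L[ℂ] HT) {U : HT →L[ℂ] HT}
    (hUiso : ∀ f : HT, ‖U f‖ = ‖f‖) (hUsurj : Function.Surjective U) :
    bT (W.comp U) = bT W := by
  unfold bT
  congr 1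
  funext p
  congr 1
  refine Finset.sum_congr rfl fun l _ => ?_
  rw [rowSum_eq, rowSum_eq, ContinuousLinearMap.adjoint_comp, ContinuousLinearMap.comp_apply,
    norm_adjoint_unitary hUiso hUsurj]

lemma wmat_comp_hasSum (U W : HT →L[ℂ] HT) (l j : ℤ) :
    HasSum (fun k : ℤ => Wmat U l k * Wmat W k j) (Wmat (U.comp W) l j) := by
  have h1 : HasSum (fun k : ℤ => (FB.repr (W (FB j)) k : ℂ) • FB k) (W (FB j)) :=
    FB.hasSum_repr (W (FB j))
  have h2 := h1.mapL U
  have h3 := h2.mapL (innerSL ℂ (FB l))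
  have : (fun k : ℤ => (innerSL ℂ (FB l)) (U ((FB.repr (W (FB j)) k : ℂ) • FB k)))
      = fun k : ℤ => Wmat U l k * Wmat W k j := by
    funext k
    rw [_root_.map_smul, innerSL_apply_apply, inner_smul_right, wmat_inner U l k, Wmat]
    show _ * (inner (𝕜 := ℂ) _ _) = (inner (𝕜 := ℂ) _ _) * _
    ring
  rw [this] at h3
  have h4 : (innerSL ℂ (FB l)) (U (W (FB j))) = Wmat (U.comp W) l j := by
    rw [wmat_inner]; rfl
  rwa [h4] at h3

/-! ### Convolution of summable majorants -/

noncomputable def conv (cU cW : ℤ → ℝ) (s : ℤ) : ℝ := ∑' t : ℤ, cU t * cW (s - t)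

section conv
variable {cU cW : ℤ → ℝ} (hU0 : ∀ s, 0 ≤ cU s) (hW0 : ∀ s, 0 ≤ cW s)
  (hU : Summable cU) (hW : Summable cW)

include hU0 hW0 hU hW

lemma conv_term_summable (s : ℤ) : Summable (fun t : ℤ => cU t * cW (s - t)) := by
  refine Summable.of_nonneg_of_le (fun t => mul_nonneg (hU0 t) (hW0 _))
    (fun t => mul_le_mul_of_nonneg_left ?_ (hU0 t)) (hU.mul_right (∑' u, cW u))
  exact Summable.le_tsum hW _ (fun _ _ => hW0 _)

omit hU hW in
lemma conv_nonneg' (s : ℤ) : 0 ≤ conv cU cW s :=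
  tsum_nonneg fun t => mul_nonneg (hU0 t) (hW0 _)

lemma conv_summable : Summable (conv cU cW) := by
  apply summable_of_sum_le (conv_nonneg' hU0 hW0)
  intro F
  calc ∑ s ∈ F, conv cU cW s
      = ∑' t : ℤ, ∑ s ∈ F, cU t * cW (s - t) := by
        simp only [conv]
        exact (Summable.tsum_finsetSum (fun s _ => conv_term_summable hU0 hW0 hU hW s)).symm
    _ ≤ ∑' t : ℤ, cU t * ∑' u, cW u := by
        refine Summable.tsum_le_tsum (fun t => ?_) ?_ (hU.mul_right _)
        · rw [← Finset.mul_sum]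
          refine mul_le_mul_of_nonneg_left ?_ (hU0 t)
          have : ∑ s ∈ F, cW (s - t) = ∑ u ∈ F.map (Equiv.subRight t).toEmbedding, cW u := by
            rw [Finset.sum_map]; rfl
          rw [this]
          exact Summable.sum_le_tsum _ (fun _ _ => hW0 _) hW
        · exact summable_sum fun s _ => conv_term_summable hU0 hW0 hU hW s
    _ = (∑' u, cW u) * ∑' t, cU t := by rw [tsum_mul_right, mul_comm]

lemma conv_le (s : ℤ) : conv cU cW s ≤ (∑' t, cU t) * ∑' u, cW u := by
  rw [conv]
  calc ∑' t : ℤ, cU t * cW (s - t) ≤ ∑' t : ℤ, cU t * ∑' u, cW u := by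
        refine Summable.tsum_le_tsum (fun t => mul_le_mul_of_nonneg_left ?_ (hU0 t))
          (conv_term_summable hU0 hW0 hU hW s) (hU.mul_right _)
        exact Summable.le_tsum hW _ (fun _ _ => hW0 _)
    _ = (∑' t, cU t) * ∑' u, cW u := tsum_mul_right

end conv

lemma conv_reindex (cU cW : ℤ → ℝ) (l j : ℤ) :
    ∑' k : ℤ, cU (l - k) * cW (k - j) = conv cU cW (l - j) := by
  rw [conv, ← (Equiv.subLeft l).tsum_eq (fun t => cU t * cW (l - j - t))]
  refine tsum_congr fun k => ?_
  simp only [Equiv.subLeft_apply]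
  congr 2
  omega

lemma sum_Ico_shift (d : ℤ → ℝ) (j : ℤ) (M : ℕ) :
    ∑ l ∈ Finset.Ico (j - M) (j + M + 1), d (l - j) = ∑ s ∈ Finset.Ico (-(M:ℤ)) (M + 1), d s := by
  have h : Finset.Ico (j - (M:ℤ)) (j + M + 1) =
      Finset.map (addLeftEmbedding j) (Finset.Ico (-(M:ℤ)) (M + 1)) := by
    rw [Finset.map_add_left_Ico]
    congr 1 <;> ring
  rw [h, Finset.sum_map]
  refine Finset.sum_congr rfl fun s _ => ?_
  simp [addLeftEmbedding]

lemma sum_Ico_shift' (d : ℤ → ℝ) (l : ℤ) (M : ℕ) :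
    ∑ j ∈ Finset.Ico (l - M) (l + M + 1), d (l - j) = ∑ s ∈ Finset.Ico (-(M:ℤ)) (M + 1), d s := by
  calc ∑ j ∈ Finset.Ico (l - (M:ℤ)) (l + M + 1), d (l - j)
      = ∑ j ∈ Finset.Ico (l - (M:ℤ)) (l + M + 1), (fun t => d (-t)) (j - l) :=
        Finset.sum_congr rfl fun j _ => by simp [neg_sub]
    _ = ∑ s ∈ Finset.Ico (-(M:ℤ)) (M + 1), (fun t => d (-t)) s := sum_Ico_shift (fun t => d (-t)) l M
    _ = ∑ s ∈ Finset.Ico (-(M:ℤ)) (M + 1), d s := by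
        refine Finset.sum_equiv (Equiv.neg ℤ) (fun i => ?_) (fun i _ => by simp)
        simp only [Finset.mem_Ico, Equiv.neg_apply]
        omega

set_option maxHeartbeats 2000000 in
lemma key_estimate {A B : ℤ → ℤ → ℝ} {d : ℤ → ℝ}
    (hA0 : ∀ l j, 0 ≤ A l j) (hB0 : ∀ l j, 0 ≤ B l j)
    (hd0 : ∀ s, 0 ≤ d s) (hd : Summable d)
    (hAd : ∀ l j, A l j ≤ d (l - j)) (hBd : ∀ l j, B l j ≤ d (l - j))
    (hcol : ∀ j, ∑' l, A l j = ∑' l, B l j)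
    {ε : ℝ} (hε : 0 < ε) :
    ∃ N₀ : ℕ, 0 < N₀ ∧ ∀ (a : ℤ) (N : ℕ), N₀ ≤ N →
      |(1 / (N:ℝ)) * ∑ l ∈ Finset.Ico a (a + (N:ℤ)), ∑' j, B l j -
       (1 / (N:ℝ)) * ∑ l ∈ Finset.Ico a (a + (N:ℤ)), ∑' j, A l j| ≤ ε := by
  -- basic facts about d
  set D : ℝ := ∑' s, d s with hD
  have hD0 : 0 ≤ D := tsum_nonneg hd0
  have hdcol : ∀ j : ℤ, Summable (fun l => d (l - j)) := fun j =>
    ((Equiv.subRight j).summable_iff (f := d)).mpr hd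
  have hdrow : ∀ l : ℤ, Summable (fun j => d (l - j)) := fun l =>
    ((Equiv.subLeft l).summable_iff (f := d)).mpr hd
  have hdcolD : ∀ j : ℤ, ∑' l, d (l - j) = D := fun j => (Equiv.subRight j).tsum_eq d
  have hdrowD : ∀ l : ℤ, ∑' j, d (l - j) = D := fun l => (Equiv.subLeft l).tsum_eq d
  -- summability of rows and columns of A and B
  have hArow : ∀ l, Summable (fun j => A l j) := fun l =>
    Summable.of_nonneg_of_le (hA0 l) (hAd l) (hdrow l)
  have hBrow : ∀ l, Summable (fun j => B l j) := fun l =>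
    Summable.of_nonneg_of_le (hB0 l) (hBd l) (hdrow l)
  have hAcol : ∀ j, Summable (fun l => A l j) := fun j =>
    Summable.of_nonneg_of_le (fun l => hA0 l j) (fun l => hAd l j) (hdcol j)
  have hBcol : ∀ j, Summable (fun l => B l j) := fun j =>
    Summable.of_nonneg_of_le (fun l => hB0 l j) (fun l => hBd l j) (hdcol j)
  -- choose M with small tail
  obtain ⟨F₀, hF₀⟩ : ∃ F₀ : Finset ℤ, ∀ F ≥ F₀, dist (∑ s ∈ F, d s) D < ε / 8 := by
    have := (Metric.tendsto_nhds.mp hd.hasSum) (ε / 8) (by positivity)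
    exact eventually_atTop.mp this
  set M : ℕ := F₀.sup fun s => s.natAbs with hM
  set tM : ℝ := D - ∑ s ∈ Finset.Ico (-(M:ℤ)) (M + 1), d s with htM
  have hF₀sub : F₀ ⊆ Finset.Ico (-(M:ℤ)) (M + 1) := by
    intro s hs
    have : s.natAbs ≤ M := Finset.le_sup (f := fun s : ℤ => s.natAbs) hs
    simp only [Finset.mem_Ico]
    omega
  clear_value M
  have htM0 : 0 ≤ tM := by
    have := Summable.sum_le_tsum (Finset.Ico (-(M:ℤ)) (M + 1)) (fun s _ => hd0 s) hd
    simp only [htM]; linarith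
  have htMε : tM ≤ ε / 8 := by
    have h1 := hF₀ F₀ le_rfl
    rw [Real.dist_eq] at h1
    have h2 : ∑ s ∈ F₀, d s ≤ ∑ s ∈ Finset.Ico (-(M:ℤ)) (M + 1), d s :=
      Finset.sum_le_sum_of_subset_of_nonneg hF₀sub (fun s _ _ => hd0 s)
    have h3 : D - ∑ s ∈ F₀, d s < ε / 8 := by
      have := abs_lt.mp h1; linarith
    simp only [htM]; linarith
  -- choose N₀
  obtain ⟨N₀, hN₀pos, hN₀⟩ : ∃ N₀ : ℕ, 0 < N₀ ∧ (16 * M * D + 1) / ε ≤ (N₀ : ℝ) := by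
    refine ⟨max 1 ⌈(16 * M * D + 1) / ε⌉₊, by simp, ?_⟩
    calc (16 * M * D + 1) / ε ≤ (⌈(16 * M * D + 1) / ε⌉₊ : ℝ) := Nat.le_ceil _
      _ ≤ ((max 1 ⌈(16 * M * D + 1) / ε⌉₊ : ℕ) : ℝ) := by
          exact_mod_cast Nat.le_max_right _ _
  refine ⟨N₀, hN₀pos, fun a N hN => ?_⟩
  have hNpos : 0 < N := lt_of_lt_of_le hN₀pos hN
  have hNR : (0:ℝ) < N := by exact_mod_cast hNpos
  set I : Finset ℤ := Finset.Ico a (a + (N:ℤ)) with hI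
  set Jbig : Finset ℤ := Finset.Ico (a - (M:ℤ)) (a + N + M) with hJbig
  set Jmid : Finset ℤ := Finset.Ico (a + (M:ℤ)) (a + N - M) with hJmid
  set colA : ℤ → ℝ := fun j => ∑ l ∈ I, A l j with hcolA
  set colB : ℤ → ℝ := fun j => ∑ l ∈ I, B l j with hcolB
  set colD : ℤ → ℝ := fun j => ∑ l ∈ I, d (l - j) with hcolD
  have hcolA0 : ∀ j, 0 ≤ colA j := fun j => Finset.sum_nonneg fun l _ => hA0 l j
  have hcolB0 : ∀ j, 0 ≤ colB j := fun j => Finset.sum_nonneg fun l _ => hB0 l j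
  have hcolAled : ∀ j, colA j ≤ colD j := fun j => Finset.sum_le_sum fun l _ => hAd l j
  have hcolBled : ∀ j, colB j ≤ colD j := fun j => Finset.sum_le_sum fun l _ => hBd l j
  have hcolDleD : ∀ j, colD j ≤ D := fun j => by
    have := Summable.sum_le_tsum I (fun l _ => hd0 (l - j)) (hdcol j)
    rwa [hdcolD j] at this
  have hcolDsum : Summable colD := summable_sum fun l _ => hdrow l
  have hcolAsum : Summable colA :=
    Summable.of_nonneg_of_le hcolA0 hcolAled hcolDsum
  have hcolBsum : Summable colB :=
    Summable.of_nonneg_of_le hcolB0 hcolBled hcolDsum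
  have habs_sum : Summable (fun j => |colB j - colA j|) := by
    refine Summable.of_nonneg_of_le (fun j => abs_nonneg _) (fun j => ?_)
      (hcolBsum.add hcolAsum)
    calc |colB j - colA j| ≤ |colB j| + |colA j| := abs_sub _ _
      _ = colB j + colA j := by rw [abs_of_nonneg (hcolB0 j), abs_of_nonneg (hcolA0 j)]
  -- pointwise bound in the middle region
  have boundMid : ∀ j ∈ Jmid, |colB j - colA j| ≤ 2 * tM := by
    intro j hj
    rw [hJmid, Finset.mem_Ico] at hj
    set outA : ℝ := ∑' l : {x // x ∉ I}, A (↑l) j with houtA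
    set outB : ℝ := ∑' l : {x // x ∉ I}, B (↑l) j with houtB
    set outd : ℝ := ∑' l : {x // x ∉ I}, d ((↑l : ℤ) - j) with houtd
    have hTA : colA j + outA = ∑' l, A l j := Summable.sum_add_tsum_subtype_compl (hAcol j) I
    have hTB : colB j + outB = ∑' l, A l j := by
      rw [hcol j]; exact Summable.sum_add_tsum_subtype_compl (hBcol j) I
    have hTd : colD j + outd = D := by
      rw [← hdcolD j]; exact Summable.sum_add_tsum_subtype_compl (hdcol j) I
    have houtA0 : 0 ≤ outA := tsum_nonneg fun l => hA0 _ _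
    have houtB0 : 0 ≤ outB := tsum_nonneg fun l => hB0 _ _
    have houtAle : outA ≤ outd :=
      Summable.tsum_le_tsum (fun l => hAd _ _) ((hAcol j).subtype _) ((hdcol j).subtype _)
    have houtBle : outB ≤ outd :=
      Summable.tsum_le_tsum (fun l => hBd _ _) ((hBcol j).subtype _) ((hdcol j).subtype _)
    have hsubI : Finset.Ico (j - (M:ℤ)) (j + M + 1) ⊆ I := by
      rw [hI]; exact Finset.Ico_subset_Ico (by omega) (by omega)
    have hcolD_ge : ∑ s ∈ Finset.Ico (-(M:ℤ)) (M + 1), d s ≤ colD j := by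
      rw [← sum_Ico_shift d j M, hcolD]
      exact Finset.sum_le_sum_of_subset_of_nonneg hsubI (fun l _ _ => hd0 _)
    have houtdle : outd ≤ tM := by simp only [htM]; linarith
    have : colB j - colA j = outA - outB := by linarith
    rw [this]
    rw [abs_le]
    constructor <;> nlinarith
  -- pointwise bound everywhere
  have boundAll : ∀ j, |colB j - colA j| ≤ 2 * D := by
    intro j
    rw [abs_le]
    have h1 := hcolAled j; have h2 := hcolBled j; have h3 := hcolDleD j
    have := hcolA0 j; have := hcolB0 j
    constructor <;> nlinarith
  -- the tail bound
  have boundTail : ∑' j : {x // x ∉ Jbig}, |colB ↑j - colA ↑j| ≤ 2 * (N * tM) := by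
    have hstep1 : ∑' j : {x // x ∉ Jbig}, |colB ↑j - colA ↑j|
        ≤ ∑' j : {x // x ∉ Jbig}, 2 * colD ↑j := by
      refine Summable.tsum_le_tsum (fun j => ?_) (habs_sum.subtype _)
        (((hcolDsum.mul_left 2)).subtype _)
      calc |colB ↑j - colA ↑j| ≤ |colB ↑j| + |colA ↑j| := abs_sub _ _
        _ = colB ↑j + colA ↑j := by
            rw [abs_of_nonneg (hcolB0 _), abs_of_nonneg (hcolA0 _)]
        _ ≤ 2 * colD ↑j := by
            have := hcolAled (↑j : ℤ); have := hcolBled (↑j : ℤ); linarith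
    refine hstep1.trans ?_
    have hswap : ∑' j : {x // x ∉ Jbig}, colD ↑j
        = ∑ l ∈ I, ∑' j : {x // x ∉ Jbig}, d (l - ↑j) := by
      simp only [hcolD]
      exact Summable.tsum_finsetSum fun l _ => (hdrow l).subtype _
    have hper : ∀ l ∈ I, ∑' j : {x // x ∉ Jbig}, d (l - ↑j) ≤ tM := by
      intro l hl
      rw [hI, Finset.mem_Ico] at hl
      have hTl : (∑ j ∈ Jbig, d (l - j)) + ∑' j : {x // x ∉ Jbig}, d (l - ↑j) = D := by
        rw [← hdrowD l]; exact Summable.sum_add_tsum_subtype_compl (hdrow l) Jbig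
      have hsubJ : Finset.Ico (l - (M:ℤ)) (l + M + 1) ⊆ Jbig := by
        rw [hJbig]; exact Finset.Ico_subset_Ico (by omega) (by omega)
      have hge : ∑ s ∈ Finset.Ico (-(M:ℤ)) (M + 1), d s ≤ ∑ j ∈ Jbig, d (l - j) := by
        rw [← sum_Ico_shift' d l M]
        exact Finset.sum_le_sum_of_subset_of_nonneg hsubJ (fun _ _ _ => hd0 _)
      simp only [htM]; linarith
    have hIcard : (I.card : ℝ) = N := by
      rw [hI, Int.card_Ico]
      have : (a + (N:ℤ) - a).toNat = N := by omega
      rw [this]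
    calc ∑' j : {x // x ∉ Jbig}, 2 * colD ↑j
        = 2 * ∑' j : {x // x ∉ Jbig}, colD ↑j := by rw [tsum_mul_left]
      _ = 2 * ∑ l ∈ I, ∑' j : {x // x ∉ Jbig}, d (l - ↑j) := by rw [hswap]
      _ ≤ 2 * ∑ l ∈ I, tM := by
          have := Finset.sum_le_sum hper
          linarith
      _ = 2 * (N * tM) := by
          rw [Finset.sum_const, nsmul_eq_mul, ← hIcard]
  -- assembling
  have hJmidJbig : Jmid ⊆ Jbig := by
    rw [hJmid, hJbig]; exact Finset.Ico_subset_Ico (by omega) (by omega)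
  have hSB : ∑ l ∈ I, ∑' j, B l j = ∑' j, colB j := by
    simp only [hcolB]; exact (Summable.tsum_finsetSum fun l _ => hBrow l).symm
  have hSA : ∑ l ∈ I, ∑' j, A l j = ∑' j, colA j := by
    simp only [hcolA]; exact (Summable.tsum_finsetSum fun l _ => hArow l).symm
  have hdiffsum : ∑' j, colB j - ∑' j, colA j = ∑' j, (colB j - colA j) :=
    (Summable.tsum_sub hcolBsum hcolAsum).symm
  have habs1 : |∑' j, (colB j - colA j)| ≤ ∑' j, |colB j - colA j| := by
    simpa [Real.norm_eq_abs] using norm_tsum_le_tsum_norm (f := fun j => colB j - colA j)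
      (by simpa [Real.norm_eq_abs] using habs_sum)
  have hsplit : ∑' j, |colB j - colA j|
      = ∑ j ∈ Jbig, |colB j - colA j| + ∑' j : {x // x ∉ Jbig}, |colB ↑j - colA ↑j| :=
    (Summable.sum_add_tsum_subtype_compl habs_sum Jbig).symm
  have hsdiff : ∑ j ∈ Jbig, |colB j - colA j|
      = ∑ j ∈ Jbig \ Jmid, |colB j - colA j| + ∑ j ∈ Jmid, |colB j - colA j| :=
    (Finset.sum_sdiff hJmidJbig).symm
  have hmid : ∑ j ∈ Jmid, |colB j - colA j| ≤ (N : ℝ) * (2 * tM) := by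
    have h1 := Finset.sum_le_card_nsmul Jmid _ (2 * tM) boundMid
    have hcard : (Jmid.card : ℝ) ≤ N := by
      rw [hJmid, Int.card_Ico]
      have : (a + N - (M:ℤ) - (a + M)).toNat ≤ N := by omega
      exact_mod_cast this
    rw [nsmul_eq_mul] at h1
    calc ∑ j ∈ Jmid, |colB j - colA j| ≤ (Jmid.card : ℝ) * (2 * tM) := h1
      _ ≤ (N : ℝ) * (2 * tM) := mul_le_mul_of_nonneg_right hcard (by linarith)
  have hbd : ∑ j ∈ Jbig \ Jmid, |colB j - colA j| ≤ (4 * M : ℝ) * (2 * D) := by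
    have h1 := Finset.sum_le_card_nsmul (Jbig \ Jmid) _ (2 * D) (fun j _ => boundAll j)
    have hcard : ((Jbig \ Jmid).card : ℝ) ≤ 4 * M := by
      have hc1 : Jbig.card = N + 2 * M := by rw [hJbig, Int.card_Ico]; omega
      have hc2 : Jmid.card = N - 2 * M := by rw [hJmid, Int.card_Ico]; omega
      have h3 : (Jbig \ Jmid).card ≤ 4 * M := by
        rw [Finset.card_sdiff_of_subset hJmidJbig, hc1, hc2]; omega
      exact_mod_cast h3
    rw [nsmul_eq_mul] at h1
    calc ∑ j ∈ Jbig \ Jmid, |colB j - colA j| ≤ ((Jbig \ Jmid).card : ℝ) * (2 * D) := h1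
      _ ≤ (4 * M : ℝ) * (2 * D) := mul_le_mul_of_nonneg_right hcard (by linarith)
  have htotal : |∑ l ∈ I, ∑' j, B l j - ∑ l ∈ I, ∑' j, A l j|
      ≤ 4 * N * tM + 8 * M * D := by
    rw [hSB, hSA, hdiffsum]
    calc |∑' j, (colB j - colA j)| ≤ ∑' j, |colB j - colA j| := habs1
      _ = ∑ j ∈ Jbig, |colB j - colA j| + ∑' j : {x // x ∉ Jbig}, |colB ↑j - colA ↑j| := hsplit
      _ ≤ (∑ j ∈ Jbig \ Jmid, |colB j - colA j| + ∑ j ∈ Jmid, |colB j - colA j|)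
            + 2 * (N * tM) := by rw [← hsdiff]; linarith [boundTail]
      _ ≤ ((4 * M : ℝ) * (2 * D) + (N : ℝ) * (2 * tM)) + 2 * (N * tM) := by
          linarith [hmid, hbd]
      _ = 4 * N * tM + 8 * M * D := by ring
  -- final computation
  have hNge : (16 * M * D + 1) / ε ≤ (N : ℝ) := by
    refine hN₀.trans ?_
    exact_mod_cast hN
  have h16 : 16 * (M:ℝ) * D ≤ ε * N := by
    have h0 : 16 * (M:ℝ) * D + 1 ≤ ε * N := by
      rw [div_le_iff₀ hε] at hNge; nlinarith
    linarith
  calc |(1 / (N:ℝ)) * ∑ l ∈ I, ∑' j, B l j - (1 / (N:ℝ)) * ∑ l ∈ I, ∑' j, A l j|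
      = (1 / (N:ℝ)) * |∑ l ∈ I, ∑' j, B l j - ∑ l ∈ I, ∑' j, A l j| := by
        rw [← mul_sub, abs_mul, abs_of_nonneg (by positivity : (0:ℝ) ≤ 1 / (N:ℝ))]
    _ ≤ (1 / (N:ℝ)) * (4 * N * tM + 8 * M * D) := by
        have : (0:ℝ) ≤ 1 / (N:ℝ) := by positivity
        exact mul_le_mul_of_nonneg_left htotal this
    _ = 4 * tM + 8 * M * D / N := by field_simp
    _ ≤ 4 * (ε / 8) + ε / 2 := by
        have h8 : 8 * (M:ℝ) * D / N ≤ ε / 2 := by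
          rw [div_le_iff₀ hNR]; nlinarith
        have := htMε
        linarith
    _ = ε := by ring

lemma limsup_congr_of_close {f g : ℤ × ℕ → ℝ} {C : ℝ}
    (hf0 : ∀ p, 0 ≤ f p) (hfC : ∀ p, f p ≤ C) (hg0 : ∀ p, 0 ≤ g p) (hgC : ∀ p, g p ≤ C)
    (h : ∀ ε : ℝ, 0 < ε → ∃ N₀ : ℕ, ∀ (a : ℤ) (N : ℕ), N₀ ≤ N → |f (a, N) - g (a, N)| ≤ ε) :
    limsup f (comap Prod.snd atTop) = limsup g (comap Prod.snd atTop) := by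
  set L : Filter (ℤ × ℕ) := comap Prod.snd atTop with hL
  haveI : L.NeBot := by
    refine comap_neBot fun t ht => ?_
    obtain ⟨n, hn⟩ := mem_atTop_sets.mp ht
    exact ⟨(0, n), hn n le_rfl⟩
  have key : ∀ (u v : ℤ × ℕ → ℝ), (∀ p, 0 ≤ u p) → (∀ p, u p ≤ C) →
      (∀ p, 0 ≤ v p) → (∀ p, v p ≤ C) →
      (∀ ε : ℝ, 0 < ε → ∃ N₀ : ℕ, ∀ (a : ℤ) (N : ℕ), N₀ ≤ N → |u (a, N) - v (a, N)| ≤ ε) →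
      limsup u L ≤ limsup v L := by
    intro u v hu0 huC hv0 hvC huv
    refine le_of_forall_pos_le_add fun ε hε => ?_
    obtain ⟨N₀, hN₀⟩ := huv ε hε
    have hev : ∀ᶠ p in L, u p ≤ v p + ε := by
      have hmem : {p : ℤ × ℕ | N₀ ≤ p.2} ∈ L := preimage_mem_comap (mem_atTop N₀)
      refine eventually_of_mem hmem fun p hp => ?_
      have := hN₀ p.1 p.2 hp
      have := abs_le.mp this
      linarith [this.1, this.2]
    have h1 : limsup u L ≤ limsup (fun p => v p + ε) L :=
      limsup_le_limsup hev
        (isCoboundedUnder_le_of_le L (x := 0) hu0)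
        (isBoundedUnder_of ⟨C + ε, fun p => by have := hvC p; linarith⟩)
    have h2 : limsup (fun p => v p + ε) L = limsup v L + ε :=
      limsup_add_const L v ε (isBoundedUnder_of ⟨C, hvC⟩)
        (isCoboundedUnder_le_of_le L (x := 0) hv0)
    linarith [h1, h2.le, h2.ge]
  exact le_antisymm (key f g hf0 hfC hg0 hgC h)
    (key g f hg0 hgC hf0 hfC (fun ε hε => by
      obtain ⟨N₀, hN₀⟩ := h ε hε
      exact ⟨N₀, fun a N hN => by rw [abs_sub_comm]; exact hN₀ a N hN⟩))


set_option maxHeartbeats 2000000 in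
lemma bT_comp_left (W : HT →L[ℂ] HT) {U : HT →L[ℂ] HT}
    (hW : IsDT W) (hU : IsDT U) (hUiso : ∀ f : HT, ‖U f‖ = ‖f‖) :
    bT (U.comp W) = bT W := by
  obtain ⟨cW, hcW0, hcWs, hcWb⟩ := hW
  obtain ⟨cU, hcU0, hcUs, hcUb⟩ := hU
  -- the convolution majorant for `U.comp W`
  have hconv0 : ∀ s, 0 ≤ conv cU cW s := conv_nonneg' hcU0 hcW0
  have hconvs : Summable (conv cU cW) := conv_summable hcU0 hcW0 hcUs hcWs
  have hUWb : ∀ l j, ‖Wmat (U.comp W) l j‖ ≤ conv cU cW (l - j) := by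
    intro l j
    have hsum := wmat_comp_hasSum U W l j
    have hterm : ∀ k : ℤ, ‖Wmat U l k * Wmat W k j‖ ≤ cU (l - k) * cW (k - j) := by
      intro k
      rw [norm_mul]
      exact mul_le_mul (hcUb l k) (hcWb k j) (norm_nonneg _)
        ((norm_nonneg _).trans (hcUb l k))
    have hmajsum : Summable (fun k : ℤ => cU (l - k) * cW (k - j)) := by
      refine Summable.of_nonneg_of_le
        (fun k => mul_nonneg (hcU0 _) (hcW0 _))
        (fun k => mul_le_mul_of_nonneg_left (Summable.le_tsum hcWs _ (fun _ _ => hcW0 _)) (hcU0 _))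
        (Summable.mul_right (∑' u, cW u) ?_)
      exact ((Equiv.subLeft l).summable_iff (f := cU)).mpr hcUs
    have hnorm : Summable (fun k : ℤ => ‖Wmat U l k * Wmat W k j‖) :=
      Summable.of_nonneg_of_le (fun k => norm_nonneg _) hterm hmajsum
    calc ‖Wmat (U.comp W) l j‖ = ‖∑' k, Wmat U l k * Wmat W k j‖ := by rw [hsum.tsum_eq]
      _ ≤ ∑' k, ‖Wmat U l k * Wmat W k j‖ := norm_tsum_le_tsum_norm hnorm
      _ ≤ ∑' k, cU (l - k) * cW (k - j) := Summable.tsum_le_tsum hterm hnorm hmajsum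
      _ = conv cU cW (l - j) := conv_reindex cU cW l j
  -- the majorant `d` for the squares
  set d : ℤ → ℝ := fun s => cW s ^ 2 + conv cU cW s ^ 2 with hd_def
  have hd0 : ∀ s, 0 ≤ d s := fun s => add_nonneg (sq_nonneg _) (sq_nonneg _)
  have hsq : ∀ (c : ℤ → ℝ), (∀ s, 0 ≤ c s) → Summable c → Summable (fun s => c s ^ 2) := by
    intro c hc0 hcs
    refine Summable.of_nonneg_of_le (fun s => sq_nonneg _) (fun s => ?_)
      (hcs.mul_right (∑' u, c u))
    have h1 : c s ≤ ∑' u, c u := Summable.le_tsum hcs _ (fun _ _ => hc0 _)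
    calc c s ^ 2 = c s * c s := sq (c s)
      _ ≤ c s * ∑' u, c u := mul_le_mul_of_nonneg_left h1 (hc0 s)
  have hds : Summable d := (hsq cW hcW0 hcWs).add (hsq _ hconv0 hconvs)
  -- pointwise bounds
  have hAd : ∀ l j, ‖Wmat W l j‖ ^ 2 ≤ d (l - j) := by
    intro l j
    have : ‖Wmat W l j‖ ^ 2 ≤ cW (l - j) ^ 2 :=
      pow_le_pow_left₀ (norm_nonneg _) (hcWb l j) 2
    calc ‖Wmat W l j‖ ^ 2 ≤ cW (l - j) ^ 2 := this
      _ ≤ d (l - j) := le_add_of_nonneg_right (sq_nonneg _)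
  have hBd : ∀ l j, ‖Wmat (U.comp W) l j‖ ^ 2 ≤ d (l - j) := by
    intro l j
    have : ‖Wmat (U.comp W) l j‖ ^ 2 ≤ conv cU cW (l - j) ^ 2 :=
      pow_le_pow_left₀ (norm_nonneg _) (hUWb l j) 2
    calc ‖Wmat (U.comp W) l j‖ ^ 2 ≤ conv cU cW (l - j) ^ 2 := this
      _ ≤ d (l - j) := le_add_of_nonneg_left (sq_nonneg _)
  -- equality of column sums
  have hcol : ∀ j, ∑' l, ‖Wmat W l j‖ ^ 2 = ∑' l, ‖Wmat (U.comp W) l j‖ ^ 2 := by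
    intro j
    rw [colSum_eq, colSum_eq, ContinuousLinearMap.comp_apply, hUiso]
  -- bounds on the averaged quantities
  set D : ℝ := ∑' s, d s with hD_def
  have hD0 : 0 ≤ D := tsum_nonneg hd0
  have hdrow : ∀ l : ℤ, Summable (fun j => d (l - j)) := fun l =>
    ((Equiv.subLeft l).summable_iff (f := d)).mpr hds
  have hdrowD : ∀ l : ℤ, ∑' j, d (l - j) = D := fun l => (Equiv.subLeft l).tsum_eq d
  have hFbound : ∀ (X : HT →L[ℂ] HT), (∀ l j, ‖Wmat X l j‖ ^ 2 ≤ d (l - j)) →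
      ∀ p : ℤ × ℕ,
        0 ≤ (1 / (p.2 : ℝ)) * ∑ l ∈ Finset.Ico p.1 (p.1 + (p.2 : ℤ)),
              ∑' j : ℤ, ‖Wmat X l j‖ ^ 2 ∧
        (1 / (p.2 : ℝ)) * ∑ l ∈ Finset.Ico p.1 (p.1 + (p.2 : ℤ)),
              ∑' j : ℤ, ‖Wmat X l j‖ ^ 2 ≤ D := by
    intro X hXd p
    have hrow : ∀ l, ∑' j : ℤ, ‖Wmat X l j‖ ^ 2 ≤ D := by
      intro l
      rw [← hdrowD l]
      exact Summable.tsum_le_tsum (hXd l) (summable_rowsq X l) (hdrow l)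
    have hrow0 : ∀ l, 0 ≤ ∑' j : ℤ, ‖Wmat X l j‖ ^ 2 := fun l =>
      tsum_nonneg fun j => sq_nonneg _
    constructor
    · refine mul_nonneg (by positivity) (Finset.sum_nonneg fun l _ => hrow0 l)
    · rcases Nat.eq_zero_or_pos p.2 with h0 | hpos
      · simp [h0, hD0]
      · have hcard : ((Finset.Ico p.1 (p.1 + (p.2 : ℤ))).card : ℝ) = p.2 := by
          rw [Int.card_Ico]
          have : (p.1 + (p.2 : ℤ) - p.1).toNat = p.2 := by omega
          rw [this]
        have hsum : ∑ l ∈ Finset.Ico p.1 (p.1 + (p.2 : ℤ)), ∑' j : ℤ, ‖Wmat X l j‖ ^ 2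
            ≤ (p.2 : ℝ) * D := by
          have := Finset.sum_le_card_nsmul (Finset.Ico p.1 (p.1 + (p.2 : ℤ)))
            (fun l => ∑' j : ℤ, ‖Wmat X l j‖ ^ 2) D (fun l _ => hrow l)
          rwa [nsmul_eq_mul, hcard] at this
        have hp2 : (0:ℝ) < p.2 := by exact_mod_cast hpos
        calc (1 / (p.2 : ℝ)) * ∑ l ∈ Finset.Ico p.1 (p.1 + (p.2 : ℤ)),
              ∑' j : ℤ, ‖Wmat X l j‖ ^ 2
            ≤ (1 / (p.2 : ℝ)) * ((p.2 : ℝ) * D) := by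
              exact mul_le_mul_of_nonneg_left hsum (by positivity)
          _ = D := by field_simp
  -- conclude via the key estimate
  unfold bT
  refine limsup_congr_of_close (C := D)
    (fun p => (hFbound (U.comp W) hBd p).1) (fun p => (hFbound (U.comp W) hBd p).2)
    (fun p => (hFbound W hAd p).1) (fun p => (hFbound W hAd p).2)
    (fun ε hε => ?_)
  obtain ⟨N₀, _, hkey⟩ := key_estimate (A := fun l j => ‖Wmat W l j‖ ^ 2)
    (B := fun l j => ‖Wmat (U.comp W) l j‖ ^ 2) (d := d)
    (fun l j => sq_nonneg _) (fun l j => sq_nonneg _) hd0 hds hAd hBd hcol hε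
  exact ⟨N₀, fun a N hN => hkey a N hN⟩

theorem bT_mul_unitary (W U : HT →L[ℂ] HT)
    (hW : IsDT W) (hU : IsDT U)
    (hUiso : ∀ f : HT, ‖U f‖ = ‖f‖) (hUsurj : Function.Surjective U) :
    bT (W.comp U) = bT W ∧ bT (U.comp W) = bT W ∧
    (∀ V : HT →L[ℂ] HT, U.comp V = ContinuousLinearMap.id ℂ HT →
      V.comp U = ContinuousLinearMap.id ℂ HT →
      bT (V.comp (W.comp U)) = bT W) := by
  refine ⟨bT_comp_right W hUiso hUsurj, bT_comp_left W hW hU hUiso, fun V hUV hVU => ?_⟩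
  have hUVapp : ∀ x, U (V x) = x := fun x => by
    have := congrArg (fun T : HT →L[ℂ] HT => T x) hUV
    simpa using this
  have hVUapp : ∀ x, V (U x) = x := fun x => by
    have := congrArg (fun T : HT →L[ℂ] HT => T x) hVU
    simpa using this
  have hViso : ∀ f : HT, ‖V f‖ = ‖f‖ := fun f => by
    rw [← hUiso (V f), hUVapp f]
  have hVDT : IsDT V := by
    obtain ⟨cU, hcU0, hcUs, hcUb⟩ := hU
    refine ⟨fun s => cU (-s), fun s => hcU0 _,
      ((Equiv.neg ℤ).summable_iff (f := cU)).mpr hcUs, fun j k => ?_⟩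
    have e1 : inner (𝕜 := ℂ) (FB j) (V (FB k)) = inner (𝕜 := ℂ) (U (FB j)) (FB k) := by
      conv_rhs => rw [← hUVapp (FB k)]
      exact (inner_unitary_map hUiso hUsurj (FB j) (V (FB k))).symm
    have h1 : ‖Wmat V j k‖ = ‖Wmat U k j‖ := by
      rw [wmat_inner, wmat_inner, e1, ← inner_conj_symm, RCLike.norm_conj]
    show ‖Wmat V j k‖ ≤ cU (-(j - k))
    rw [h1, show (-(j - k) : ℤ) = k - j by ring]
    exact hcUb k j
  have hassoc : V.comp (W.comp U) = (V.comp W).comp U :=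
    (ContinuousLinearMap.comp_assoc V W U).symm
  rw [hassoc, bT_comp_right (V.comp W) hUiso hUsurj,
    bT_comp_left W hW hVDT hViso]

end MuNorm
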